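/- Let S be a right noetherian semigroup and X a subset of S. Then the right stabiliser Stab_R(X) = {s ∈ S¹ : Xs = X} is a right noetherian monoid. -/

import Mathlib

/-- A right congruence on a semigroup: an equivalence relation compatible with
right multiplication. -/
def IsRightCongruence {S : Type*} [Semigroup S] (r : S → S → Prop) : Prop :=
  Equivalence r ∧ ∀ a b c : S, r a b → r (a * c) (b * c)

/-- A right congruence is finitely generated if it is the least right congruence
containing some finite set of pairs. -/
def IsFGRightCongruence {S : Type*} [Semigroup S] (r : S → S → Prop) : Prop :=
  IsRightCongruence r ∧ ∃ X : Finset (S × S),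
    (∀ p ∈ X, r p.1 p.2) ∧
    ∀ r' : S → S → Prop, IsRightCongruence r' → (∀ p ∈ X, r' p.1 p.2) →
      ∀ a b : S, r a b → r' a b

/-- A semigroup is right noetherian if every right congruence on it is finitely
generated. -/
def RightNoetherian (S : Type*) [Semigroup S] : Prop :=
  ∀ r : S → S → Prop, IsRightCongruence r → IsFGRightCongruence r

/-- A right congruence on a subset `T` of a semigroup (viewed as a subsemigroup):
an equivalence relation on `T` compatible with right multiplication by elements of `T`. -/
def IsRightCongruenceOn {S : Type*} [Semigroup S] (T : Set S) (r : S → S → Prop) : Prop :=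
  (∀ a ∈ T, r a a) ∧ (∀ a b : S, r a b → r b a) ∧
  (∀ a b c : S, r a b → r b c → r a c) ∧
  (∀ a b : S, r a b → a ∈ T ∧ b ∈ T) ∧
  (∀ a b c : S, r a b → c ∈ T → r (a * c) (b * c))

/-- Finite generation of a right congruence on the subsemigroup `T`. -/
def IsFGRightCongruenceOn {S : Type*} [Semigroup S] (T : Set S) (r : S → S → Prop) : Prop :=
  IsRightCongruenceOn T r ∧ ∃ X : Finset (S × S),
    (∀ p ∈ X, r p.1 p.2) ∧
    ∀ r' : S → S → Prop, IsRightCongruenceOn T r' → (∀ p ∈ X, r' p.1 p.2) →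
      ∀ a b : S, r a b → r' a b

/-- The subsemigroup `T` is right noetherian. -/
def RightNoetherianOn {S : Type*} [Semigroup S] (T : Set S) : Prop :=
  ∀ r : S → S → Prop, IsRightCongruenceOn T r → IsFGRightCongruenceOn T r

section StabAux

variable {S : Type*} [Semigroup S]

/-- The right stabiliser of `X` in `S¹`. -/
def stab (X : Set S) : Set (WithOne S) :=
  {m : WithOne S | (fun x => x * m) '' (WithOne.coe '' X) = WithOne.coe '' X}

theorem one_mem_stab (X : Set S) : (1 : WithOne S) ∈ stab X := by
  simp [stab]

theorem mem_stab_cancel (X : Set S) {u c : WithOne S}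
    (hu : u ∈ stab X) (huc : u * c ∈ stab X) : c ∈ stab X := by
  simp only [stab, Set.mem_setOf_eq] at *
  have h1 : (fun x => x * (u * c)) '' (WithOne.coe '' X)
      = (fun x => x * c) '' ((fun x => x * u) '' (WithOne.coe '' X)) := by
    simp only [Set.image_image, mul_assoc]
  rw [hu] at h1
  rw [h1] at huc
  exact huc

/-- Elementary-step relation on `S` induced by a set of pairs over `S¹`. -/
def ChainRel (P : Set (WithOne S × WithOne S)) : S → S → Prop :=
  fun a b => ∃ u v c : WithOne S, ((u, v) ∈ P ∨ (v, u) ∈ P) ∧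
    (↑a : WithOne S) = u * c ∧ (↑b : WithOne S) = v * c

theorem chainRel_symm (P : Set (WithOne S × WithOne S)) : Symmetric (ChainRel P) := by
  rintro a b ⟨u, v, c, hp, ha, hb⟩
  exact ⟨v, u, c, hp.symm, hb, ha⟩

theorem chainRel_mul (P : Set (WithOne S × WithOne S)) {a b : S} (d : S)
    (h : ChainRel P a b) : ChainRel P (a * d) (b * d) := by
  obtain ⟨u, v, c, hp, ha, hb⟩ := h
  refine ⟨u, v, c * (↑d : WithOne S), hp, ?_, ?_⟩
  · rw [WithOne.coe_mul, ha, mul_assoc]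
  · rw [WithOne.coe_mul, hb, mul_assoc]

theorem chainRel_mono {P Q : Set (WithOne S × WithOne S)} (h : P ⊆ Q) {a b : S}
    (hab : ChainRel P a b) : ChainRel Q a b := by
  obtain ⟨u, v, c, hp, ha, hb⟩ := hab
  exact ⟨u, v, c, hp.imp (fun h' => h h') (fun h' => h h'), ha, hb⟩

theorem chainRel_congruence (P : Set (WithOne S × WithOne S)) :
    IsRightCongruence (Relation.ReflTransGen (ChainRel P)) := by
  refine ⟨⟨fun a => .refl, fun h => by haveI : Std.Symm (ChainRel P) := ⟨fun _ _ h' => chainRel_symm P h'⟩; exact Std.Symm.symm _ _ h,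
    fun h1 h2 => h1.trans h2⟩, ?_⟩
  intro a b c hab
  induction hab with
  | refl => exact .refl
  | tail h1 step ih => exact ih.tail (chainRel_mul P c step)

/-- Walking along a chain whose generating pairs lie in a right congruence `r'` on the
stabiliser keeps us inside the stabiliser and inside an `r'`-class. -/
theorem chain_to_congr (X : Set S) (r' : WithOne S → WithOne S → Prop)
    (hr' : IsRightCongruenceOn (stab X) r')
    (G : Set (WithOne S × WithOne S)) (hG : ∀ p ∈ G, r' p.1 p.2) :
    ∀ a b : S, Relation.ReflTransGen (ChainRel G) a b →
      (↑a : WithOne S) ∈ stab X → r' ↑a ↑b := by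
  obtain ⟨hrefl, hsymm, htrans, hmem, hcomp⟩ := hr'
  intro a b hchain
  induction hchain with
  | refl => intro ha; exact hrefl _ ha
  | tail h1 step ih =>
    intro ha
    have hab := ih ha
    have hbT := (hmem _ _ hab).2
    obtain ⟨u, v, c, hp, hb, hc⟩ := step
    have huv : r' u v := hp.elim (fun h' => hG _ h') (fun h' => hsymm _ _ (hG _ h'))
    have huT := (hmem _ _ huv).1
    rw [hb] at hbT
    have hcT : c ∈ stab X := mem_stab_cancel X huT hbT
    have hstep := hcomp _ _ _ huv hcT
    rw [← hb, ← hc] at hstep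
    exact htrans _ _ _ hab hstep

theorem aux_min (X : Set S) (ρ : WithOne S → WithOne S → Prop)
    (hρ : IsRightCongruenceOn (stab X) ρ)
    (G : Finset (WithOne S × WithOne S))
    (hcover : ∀ a b : S, ρ ↑a ↑b →
      Relation.ReflTransGen (ChainRel ((↑G : Set (WithOne S × WithOne S)))) a b)
    (hone : ∀ w : WithOne S, ρ 1 w → w = 1 ∨
      ∃ b : S, ((1 : WithOne S), (↑b : WithOne S)) ∈ G ∧ ρ 1 ↑b) :
    ∀ r' : WithOne S → WithOne S → Prop, IsRightCongruenceOn (stab X) r' →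
      (∀ p ∈ G, r' p.1 p.2) → ∀ u v : WithOne S, ρ u v → r' u v := by
  intro r' hr' hGr'
  obtain ⟨hrefl, hsymm, htrans, hmem, hcomp⟩ := id hr'
  have key : ∀ a b : S, ρ ↑a ↑b → r' ↑a ↑b := by
    intro a b hab
    exact chain_to_congr X r' hr' _ (fun p hp => hGr' p hp) a b (hcover a b hab)
      ((hρ.2.2.2.1 _ _ hab).1)
  have key1 : ∀ w : WithOne S, ρ 1 w → r' 1 w := by
    intro w hw
    rcases hone w hw with rfl | ⟨b, hbG, hb⟩
    · exact hrefl _ (one_mem_stab X)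
    · by_cases hw1 : w = 1
      · subst hw1; exact hrefl _ (one_mem_stab X)
      · obtain ⟨c, rfl⟩ := WithOne.ne_one_iff_exists.mp hw1
        have h1 : ρ ↑b ↑c := hρ.2.2.1 _ _ _ (hρ.2.1 _ _ hb) hw
        exact htrans _ _ _ (hGr' _ hbG) (key b c h1)
  intro u v huv
  by_cases hu : u = 1
  · subst hu; exact key1 v huv
  · by_cases hv : v = 1
    · subst hv; exact hsymm _ _ (key1 u (hρ.2.1 _ _ huv))
    · obtain ⟨a, rfl⟩ := WithOne.ne_one_iff_exists.mp hu
      obtain ⟨b, rfl⟩ := WithOne.ne_one_iff_exists.mp hv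
      exact key a b huv

end StabAux

theorem rightNoetherian_stabiliser (S : Type*) [Semigroup S]
    (h : RightNoetherian S) (X : Set S) :
    RightNoetherianOn
      {m : WithOne S |
        (fun x => x * m) '' (WithOne.coe '' X) = WithOne.coe '' X} := by
  show RightNoetherianOn (stab X)
  intro ρ hρ
  refine ⟨hρ, ?_⟩
  classical
  obtain ⟨-, F, hF1, hFmin⟩ :=
    h (Relation.ReflTransGen (ChainRel {p : WithOne S × WithOne S | ρ p.1 p.2}))
      (chainRel_congruence _)
  -- compactness: each chain uses only finitely many ρ-pairs
  have compact : ∀ a b : S,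
      Relation.ReflTransGen (ChainRel {p : WithOne S × WithOne S | ρ p.1 p.2}) a b →
      ∃ P : Finset (WithOne S × WithOne S), (∀ p ∈ P, ρ p.1 p.2) ∧
        Relation.ReflTransGen (ChainRel ((↑P : Set (WithOne S × WithOne S)))) a b := by
    intro a b hab
    induction hab with
    | refl => exact ⟨∅, by simp, .refl⟩
    | tail h1 step ih =>
      obtain ⟨P, hP, hchain⟩ := ih
      obtain ⟨u, v, c, hp, hb, hc⟩ := step
      rcases hp with hp | hp
      · refine ⟨insert (u, v) P, ?_, ?_⟩
        · intro p hp'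
          rcases Finset.mem_insert.mp hp' with rfl | hp'
          · exact hp
          · exact hP p hp'
        · refine (Relation.ReflTransGen.mono
            (fun x y hxy => chainRel_mono (by simp [Set.subset_insert]) hxy) _ _ hchain).tail
            ⟨u, v, c, Or.inl (by simp), hb, hc⟩
      · refine ⟨insert (v, u) P, ?_, ?_⟩
        · intro p hp'
          rcases Finset.mem_insert.mp hp' with rfl | hp'
          · exact hp
          · exact hP p hp'
        · refine (Relation.ReflTransGen.mono
            (fun x y hxy => chainRel_mono (by simp [Set.subset_insert]) hxy) _ _ hchain).tail
            ⟨u, v, c, Or.inr (by simp), hb, hc⟩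
  -- assemble one finite set of ρ-pairs good for all of F
  have assemble : ∀ F' : Finset (S × S),
      (∀ p ∈ F', Relation.ReflTransGen
        (ChainRel {p : WithOne S × WithOne S | ρ p.1 p.2}) p.1 p.2) →
      ∃ P : Finset (WithOne S × WithOne S), (∀ p ∈ P, ρ p.1 p.2) ∧
        ∀ p ∈ F', Relation.ReflTransGen
          (ChainRel ((↑P : Set (WithOne S × WithOne S)))) p.1 p.2 := by
    intro F'
    induction F' using Finset.induction_on with
    | empty => intro _; exact ⟨∅, by simp, by simp⟩
    | @insert q F'' hq ih =>
      intro hF'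
      obtain ⟨P1, hP1, hchain1⟩ := ih (fun p hp => hF' p (Finset.mem_insert_of_mem hp))
      obtain ⟨P2, hP2, hchain2⟩ := compact q.1 q.2 (hF' q (Finset.mem_insert_self _ _))
      refine ⟨P1 ∪ P2, ?_, ?_⟩
      · intro p hp
        rcases Finset.mem_union.mp hp with hp | hp
        exacts [hP1 p hp, hP2 p hp]
      · intro p hp
        rcases Finset.mem_insert.mp hp with rfl | hp
        · exact Relation.ReflTransGen.mono
            (fun x y hxy => chainRel_mono (by simp [Finset.coe_union]) hxy) _ _ hchain2
        · exact Relation.ReflTransGen.mono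
            (fun x y hxy => chainRel_mono (by simp [Finset.coe_union]) hxy) _ _ (hchain1 p hp)
  obtain ⟨P, hPρ, hFP⟩ := assemble F hF1
  have hσle : ∀ a b : S,
      Relation.ReflTransGen (ChainRel {p : WithOne S × WithOne S | ρ p.1 p.2}) a b →
      Relation.ReflTransGen (ChainRel ((↑P : Set (WithOne S × WithOne S)))) a b :=
    hFmin _ (chainRel_congruence _) hFP
  have hcover0 : ∀ a b : S, ρ ↑a ↑b →
      Relation.ReflTransGen (ChainRel ((↑P : Set (WithOne S × WithOne S)))) a b := by
    intro a b hab
    exact hσle a b (Relation.ReflTransGen.single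
      ⟨↑a, ↑b, 1, Or.inl hab, (mul_one _).symm, (mul_one _).symm⟩)
  by_cases h1 : ∃ w : S, ρ 1 ↑w
  · obtain ⟨b0, hb0⟩ := h1
    refine ⟨insert (1, (↑b0 : WithOne S)) P, ?_, ?_⟩
    · intro p hp
      rcases Finset.mem_insert.mp hp with rfl | hp
      · exact hb0
      · exact hPρ p hp
    · refine aux_min X ρ hρ _ ?_ ?_
      · intro a b hab
        exact Relation.ReflTransGen.mono
          (fun x y hxy => chainRel_mono (by simp [Set.subset_insert]) hxy) _ _ (hcover0 a b hab)
      · intro w hw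
        exact Or.inr ⟨b0, Finset.mem_insert_self _ _, hb0⟩
  · refine ⟨P, hPρ, ?_⟩
    refine aux_min X ρ hρ P hcover0 ?_
    intro w hw
    left
    by_contra hw1
    obtain ⟨c, rfl⟩ := WithOne.ne_one_iff_exists.mp hw1
    exact h1 ⟨c, hw⟩
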